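/- Let G be a reductive group acting algebraically on a variety X with a fixed point x. Then an element g of G acts trivially on X if and only if g acts trivially on the tangent space T_x X; that is, the kernels of the G-action on X and of the induced linear G-action on T_x X coincide. -/

import Mathlib

/-- A group `G` is linearly reductive (over `ℂ`) if every finite-dimensional linear
representation is semisimple, i.e. every invariant subspace has an invariant complement. -/
def IsLinearlyReductive (G : Type) [Group G] : Prop :=
  ∀ (V : Type) (_ : AddCommGroup V) (_ : Module ℂ V),
    FiniteDimensional ℂ V → ∀ (σ : Representation ℂ G V) (W : Submodule ℂ V),
      (∀ g : G, W.map (σ g) ≤ W) →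
        ∃ W' : Submodule ℂ V, IsCompl W W' ∧ ∀ g : G, W'.map (σ g) ≤ W'

/-- Let a reductive group `G` act algebraically on an (affine) variety `X` with coordinate
ring `A`, fixing a point `x : A →ₐ[ℂ] ℂ` with maximal ideal `m = ker x`.  (The action is
locally finite, and functions are separated by the powers of `m`.)  Then an element `g ∈ G`
acts trivially on `X` if and only if it acts trivially on the (co)tangent space at `x`:
the kernel of the `G`-action on `X` coincides with the kernel of the induced linear action
on `T_x X`, i.e. `g` fixes every function of `A` iff `σ g a - a ∈ m²` for every `a ∈ m`. -/
theorem kernel_on_variety_eq_kernel_on_tangent_space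
    (G : Type) [Group G] (hred : IsLinearlyReductive G)
    (A : Type) [CommRing A] [Algebra ℂ A] [IsNoetherianRing A]
    (σ : G →* (A ≃ₐ[ℂ] A))
    (x : A →ₐ[ℂ] ℂ) (hx : ∀ (g : G) (a : A), x (σ g a) = x a)
    (hlf : ∀ a : A, ∃ W : Submodule ℂ A,
      a ∈ W ∧ FiniteDimensional ℂ W ∧ ∀ g : G, W.map (σ g).toLinearMap ≤ W)
    (hsep : (⨅ n : ℕ, (RingHom.ker (x : A →+* ℂ)) ^ (n + 1)) = ⊥) :
    ∀ g : G, (∀ a : A, σ g a = a) ↔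
      (∀ a ∈ RingHom.ker (x : A →+* ℂ), σ g a - a ∈ (RingHom.ker (x : A →+* ℂ)) ^ 2) := by
  set m : Ideal A := RingHom.ker (x : A →+* ℂ) with hm
  intro g
  constructor
  · intro h a _
    rw [h a, sub_self]
    exact zero_mem _
  · intro h2
    -- every σ g' preserves m
    have hmem_m : ∀ (g' : G) (a : A), a ∈ m → σ g' a ∈ m := by
      intro g' a ha
      have : x a = 0 := ha
      show x (σ g' a) = 0
      rw [hx g' a, this]
    -- every σ g' preserves m ^ k
    have hpow : ∀ (g' : G) (k : ℕ), ∀ a ∈ m ^ k, σ g' a ∈ m ^ k := by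
      intro g' k
      induction k with
      | zero => intro a _; simp
      | succ k ih =>
        intro a ha
        rw [pow_succ] at ha ⊢
        refine Submodule.mul_induction_on ha (fun u hu v hv => ?_) (fun y z hy hz => ?_)
        · rw [map_mul]
          exact Ideal.mul_mem_mul (ih u hu) (hmem_m g' v hv)
        · rw [map_add]; exact add_mem hy hz
    -- key: g acts trivially on each m ^ k / m ^ (k+1)
    have hkey : ∀ (k : ℕ), ∀ a ∈ m ^ k, σ g a - a ∈ m ^ (k + 1) := by
      intro k
      induction k with
      | zero =>
        intro a _
        show σ g a - a ∈ m ^ 1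
        rw [pow_one]
        show x (σ g a - a) = 0
        rw [map_sub, hx, sub_self]
      | succ k ih =>
        intro a ha
        rw [pow_succ] at ha
        refine Submodule.mul_induction_on ha (fun u hu v hv => ?_) (fun y z hy hz => ?_)
        · have key : σ g (u * v) - u * v
              = (σ g u - u) * (σ g v) + u * (σ g v - v) := by
            rw [map_mul]; ring
          rw [key]
          have h1 : (σ g u - u) * (σ g v) ∈ m ^ (k + 1 + 1) := by
            have : m ^ (k + 1 + 1) = m ^ (k + 1) * m := (pow_succ m (k + 1))
            rw [this]
            exact Ideal.mul_mem_mul (ih u hu) (hmem_m g v hv)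
          have hbv : σ g v - v ∈ m ^ 2 := h2 v hv
          have h2' : u * (σ g v - v) ∈ m ^ (k + 1 + 1) := by
            have : m ^ k * m ^ 2 ≤ m ^ (k + 1 + 1) := by
              rw [← pow_add]
            exact this (Ideal.mul_mem_mul hu hbv)
          exact add_mem h1 h2'
        · have : σ g (y + z) - (y + z) = (σ g y - y) + (σ g z - z) := by
            rw [map_add]; ring
          rw [this]; exact add_mem hy hz
    intro a
    obtain ⟨W, haW, hWfd, hWinv⟩ := hlf a
    -- the filtration W ∩ m^k
    set Wk : ℕ → Submodule ℂ A :=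
      fun k => W ⊓ Submodule.restrictScalars ℂ (m ^ k) with hWk
    have hWkW : ∀ k, Wk k ≤ W := fun k => inf_le_left
    have hWkanti : ∀ {j k : ℕ}, j ≤ k → Wk k ≤ Wk j := by
      intro j k hjk
      exact inf_le_inf le_rfl (fun v hv => Ideal.pow_le_pow_right hjk hv)
    have hWkinv : ∀ (g' : G) (k : ℕ), ∀ b ∈ Wk k, σ g' b ∈ Wk k := by
      intro g' k b hb
      refine ⟨hWinv g' (Submodule.mem_map_of_mem hb.1), hpow g' k b hb.2⟩
    haveI : FiniteDimensional ℂ W := hWfd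
    haveI hfdk : ∀ k, FiniteDimensional ℂ (Wk k) :=
      fun k => Submodule.finiteDimensional_of_le (hWkW k)
    -- the filtration stabilizes, and stabilizes at ⊥
    obtain ⟨N, hN⟩ : ∃ N : ℕ, ∀ n, N ≤ n → Wk (n + 1) = Wk (N + 1) := by
      set f : ℕ → ℕ := fun n => Module.finrank ℂ (Wk (n + 1)) with hf
      have hne : (Set.range f).Nonempty := ⟨f 0, 0, rfl⟩
      obtain ⟨N, hNd⟩ : sInf (Set.range f) ∈ Set.range f := Nat.sInf_mem hne
      refine ⟨N, fun n hn => ?_⟩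
      haveI := hfdk (N + 1)
      refine Submodule.eq_of_le_of_finrank_le
        (hWkanti (by omega)) ?_
      have h1 : f N ≤ f n := hNd ▸ Nat.sInf_le ⟨n, rfl⟩
      exact h1
    have hbot : Wk (N + 1) = ⊥ := by
      rw [eq_bot_iff]
      intro v hv
      have hv' : v ∈ (⨅ n : ℕ, m ^ (n + 1)) := by
        rw [Ideal.mem_iInf]
        intro n
        rcases le_or_gt N n with h | h
        · exact ((hN n h).symm ▸ hv).2
        · exact Ideal.pow_le_pow_right (by omega) hv.2
      rw [hsep] at hv'
      simpa using hv'
    -- downward induction along the filtration, using reductivity at each step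
    have main : ∀ j : ℕ, ∀ b ∈ Wk (N + 1 - j), σ g b = b := by
      intro j
      induction j with
      | zero =>
        intro b hb
        rw [Nat.sub_zero, hbot] at hb
        rw [Submodule.mem_bot] at hb
        rw [hb, map_zero]
      | succ j ih =>
        intro b hb
        set k := N + 1 - (j + 1) with hk
        have hk1 : N + 1 - j ≤ k + 1 := by omega
        have hstep : Wk (k + 1) ≤ Wk (N + 1 - j) := hWkanti hk1
        -- the representation of G on Wk k
        set ρ : Representation ℂ G (Wk k) :=
          { toFun := fun g' => ((σ g').toLinearMap).restrict
              (fun v hv => hWkinv g' k v hv)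
            map_one' := by
              ext v
              simp [LinearMap.restrict_apply]
            map_mul' := by
              intro g1 g2
              ext v
              simp [LinearMap.restrict_apply]
              rfl } with hρ
        have hρval : ∀ (g' : G) (v : Wk k), ((ρ g' v : Wk k) : A) = σ g' (v : A) := by
          intro g' v
          simp [hρ, LinearMap.restrict_apply]
          rfl
        -- the invariant subspace W ∩ m^(k+1) inside Wk k
        set S : Submodule ℂ (Wk k) := (Wk (k + 1)).comap (Wk k).subtype with hS
        have hSinv : ∀ g' : G, S.map (ρ g') ≤ S := by
          rintro g' _ ⟨v, hv, rfl⟩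
          show ((ρ g' v : Wk k) : A) ∈ Wk (k + 1)
          rw [hρval]
          exact hWkinv g' (k + 1) _ hv
        haveI := hfdk k
        obtain ⟨C, hcompl, hCinv⟩ := hred (Wk k) _ _ (hfdk k) ρ S hSinv
        -- decompose b
        have hbk : b ∈ Wk k := hb
        have hbtop : (⟨b, hbk⟩ : Wk k) ∈ S ⊔ C := by
          rw [hcompl.sup_eq_top]; trivial
        obtain ⟨s, hsS, c, hcC, hsc⟩ := Submodule.mem_sup.mp hbtop
        -- g fixes s by the induction hypothesis
        have hsfix : σ g (s : A) = (s : A) := by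
          apply ih
          exact hstep hsS
        -- g fixes c: ρ g c - c lies in S ⊓ C = ⊥
        have hcmem : ρ g c ∈ C := hCinv g (Submodule.mem_map_of_mem hcC)
        have hdiffS : ρ g c - c ∈ S := by
          show ((ρ g c - c : Wk k) : A) ∈ Wk (k + 1)
          have hval : ((ρ g c - c : Wk k) : A) = σ g (c : A) - (c : A) := by
            rw [Submodule.coe_sub, hρval]
          rw [hval]
          constructor
          · exact sub_mem (hWkinv g k _ c.2).1 c.2.1
          · exact hkey k (c : A) c.2.2
        have hdiffC : ρ g c - c ∈ C := sub_mem hcmem hcC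
        have hdiff0 : ρ g c - c = 0 := by
          have : ρ g c - c ∈ S ⊓ C := ⟨hdiffS, hdiffC⟩
          rw [hcompl.inf_eq_bot] at this
          simpa using this
        have hcfix : σ g (c : A) = (c : A) := by
          have h' : ρ g c = c := sub_eq_zero.mp hdiff0
          rw [← hρval g c, h']
        -- conclude
        have hb' : b = (s : A) + (c : A) := by
          have := congrArg (fun v : Wk k => (v : A)) hsc
          simpa using this.symm
        rw [hb', map_add, hsfix, hcfix]
    -- finish: a ∈ Wk 0
    have ha0 : a ∈ Wk (N + 1 - (N + 1)) := by
      rw [Nat.sub_self]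
      refine ⟨haW, ?_⟩
      show a ∈ m ^ 0
      rw [pow_zero, Ideal.one_eq_top]
      trivial
    exact main (N + 1) a ha0
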